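/- Consider an instance of P_m||C_max with m ≥ 2 machines and exactly n = 2m + 1 jobs with processing times p_1 ≥ p_2 ≥ … ≥ p_n ≥ 0, and suppose p_{2m+1} ≥ p_1 − p_m. If an LPT′ schedule (obtained by placing the critical job 2m+1 first and then list-scheduling jobs 1,…,2m in order) has makespan equal to p_{2m+1} + p_m + p_{2m}, then p_{2m+1} + p_m + p_{2m} ≤ (7/6) · C*; in particular the LPT-REV value is at most (7/6) · C*. -/

import Mathlib

open Finset

/-- Load of machine `i` under schedule `σ` with processing times `p`. -/
def mload {m n : ℕ} (p : Fin n → ℝ) (σ : Fin n → Fin m) (i : Fin m) : ℝ :=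
  ∑ j ∈ Finset.univ.filter (fun j => σ j = i), p j

/-- Makespan of a schedule: the maximum machine load. -/
noncomputable def makespan {m n : ℕ} (p : Fin n → ℝ) (σ : Fin n → Fin m) : ℝ :=
  ⨆ i : Fin m, mload p σ i

/-- Optimal makespan `C*`: minimum makespan over all schedules on `m` machines. -/
noncomputable def optMakespan (m : ℕ) {n : ℕ} (p : Fin n → ℝ) : ℝ :=
  ⨅ σ : Fin n → Fin m, makespan p σ

/-- Processing times are sorted non-increasingly and are nonnegative. -/
def SortedNonneg {n : ℕ} (p : Fin n → ℝ) : Prop :=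
  (∀ i j : Fin n, i ≤ j → p j ≤ p i) ∧ ∀ j, 0 ≤ p j

/-- Load of machine `i` just before job `j` is assigned, when all jobs of `T`
are placed first and the remaining jobs are assigned in index order:
it counts all jobs of `T` on machine `i` plus all jobs of index `< j` on machine `i`. -/
def prefLoad {m n : ℕ} (p : Fin n → ℝ) (σ : Fin n → Fin m) (T : Finset (Fin n))
    (j : Fin n) (i : Fin m) : ℝ :=
  ∑ j' ∈ Finset.univ.filter (fun j' => (j' ∈ T ∨ j' < j) ∧ σ j' = i), p j'

/-- `σ` is a list schedule obtained by first placing all jobs of `T` together on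
one machine and then assigning the remaining jobs in index order (i.e. in
non-increasing order of processing time, for sorted `p`), each to a machine of
minimal current load. -/
def IsLSAfter {m n : ℕ} (p : Fin n → ℝ) (T : Finset (Fin n)) (σ : Fin n → Fin m) : Prop :=
  (∀ j ∈ T, ∀ j' ∈ T, σ j = σ j') ∧
  ∀ j, j ∉ T → ∀ i, prefLoad p σ T j (σ j) ≤ prefLoad p σ T j i

/-- `σ` is an LPT schedule: jobs assigned in order `1,…,n`, each to a machine of
minimal current load. -/
def IsLPT {m n : ℕ} (p : Fin n → ℝ) (σ : Fin n → Fin m) : Prop :=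
  IsLSAfter p ∅ σ

/-- `j'` is the critical job of schedule `σ`: it is assigned to a critical machine
(one whose load equals the makespan), and it is the largest-indexed job assigned
to a critical machine. -/
def IsCriticalJob {m n : ℕ} (p : Fin n → ℝ) (σ : Fin n → Fin m) (j' : Fin n) : Prop :=
  mload p σ (σ j') = makespan p σ ∧
  ∀ j : Fin n, mload p σ (σ j) = makespan p σ → j ≤ j'

/-- The (1-based) position of job `j'` on its machine: the number of jobs of index
`≤ j'` assigned to the same machine as `j'`. -/
def posOn {m n : ℕ} (σ : Fin n → Fin m) (j' : Fin n) : ℕ :=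
  (Finset.univ.filter (fun t => σ t = σ j' ∧ t ≤ j')).card

/-- The tuple of the `k` consecutive jobs `j'-k+1, …, j'` (in 1-based terms). -/
def tupleSet {n : ℕ} (j' : Fin n) (k : ℕ) : Finset (Fin n) :=
  Finset.univ.filter (fun t => t ≤ j' ∧ j'.val < t.val + k)

/-- An LPT′ schedule for critical job `j'`: job `j'` is placed alone on a machine
first, then the remaining jobs are assigned in index order, each to a machine of
minimal current load. -/
def IsLPTprime {m n : ℕ} (p : Fin n → ℝ) (j' : Fin n) (σ' : Fin n → Fin m) : Prop :=
  IsLSAfter p {j'} σ'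

/-- An LPT″ schedule for critical job `j'` in position `k`: jobs `j'-k+1,…,j'` are
placed together on one machine first, then the remaining jobs are assigned in
non-increasing order of processing time, each to a machine of minimal current load. -/
def IsLPTsec {m n : ℕ} (p : Fin n → ℝ) (j' : Fin n) (k : ℕ) (σ'' : Fin n → Fin m) : Prop :=
  IsLSAfter p (tupleSet j' k) σ''

lemma mload_le_makespan {m n : ℕ} (hm : 0 < m) (p : Fin n → ℝ) (σ : Fin n → Fin m)
    (i : Fin m) : mload p σ i ≤ makespan p σ := by
  have : Nonempty (Fin m) := ⟨⟨0, hm⟩⟩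
  exact le_ciSup (Set.finite_range _).bddAbove i

lemma pair_le_mload {m n : ℕ} (p : Fin n → ℝ) (hp0 : ∀ j, 0 ≤ p j)
    (σ : Fin n → Fin m) {a b : Fin n} {i : Fin m}
    (hab : a ≠ b) (ha : σ a = i) (hb : σ b = i) :
    p a + p b ≤ mload p σ i := by
  have hsub : ({a, b} : Finset (Fin n)) ⊆ Finset.univ.filter (fun j => σ j = i) := by
    intro x hx
    simp only [Finset.mem_insert, Finset.mem_singleton] at hx
    rcases hx with rfl | rfl <;> simp [ha, hb]
  have hsum : ∑ j ∈ ({a, b} : Finset (Fin n)), p j = p a + p b := by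
    rw [Finset.sum_insert (by simp [hab]), Finset.sum_singleton]
  calc p a + p b = ∑ j ∈ ({a, b} : Finset (Fin n)), p j := hsum.symm
    _ ≤ mload p σ i := Finset.sum_le_sum_of_subset_of_nonneg hsub (fun j _ _ => hp0 j)

lemma triple_le_mload {m n : ℕ} (p : Fin n → ℝ) (hp0 : ∀ j, 0 ≤ p j)
    (σ : Fin n → Fin m) {a b c : Fin n} {i : Fin m}
    (hab : a ≠ b) (hac : a ≠ c) (hbc : b ≠ c)
    (ha : σ a = i) (hb : σ b = i) (hc : σ c = i) :
    p a + p b + p c ≤ mload p σ i := by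
  have hsub : ({a, b, c} : Finset (Fin n)) ⊆ Finset.univ.filter (fun j => σ j = i) := by
    intro x hx
    simp only [Finset.mem_insert, Finset.mem_singleton] at hx
    rcases hx with rfl | rfl | rfl <;> simp [ha, hb, hc]
  have hsum : ∑ j ∈ ({a, b, c} : Finset (Fin n)), p j = p a + p b + p c := by
    rw [Finset.sum_insert (by simp [hab, hac]), Finset.sum_insert (by simp [hbc]),
      Finset.sum_singleton]; ring
  calc p a + p b + p c = ∑ j ∈ ({a, b, c} : Finset (Fin n)), p j := hsum.symm
    _ ≤ mload p σ i := Finset.sum_le_sum_of_subset_of_nonneg hsub (fun j _ _ => hp0 j)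

set_option maxHeartbeats 1000000 in
lemma key_bound {m : ℕ} (hm : 2 ≤ m) (p : Fin (2 * m + 1) → ℝ) (hp : SortedNonneg p)
    (τ : Fin (2 * m + 1) → Fin m) :
    6 / 7 * (p ⟨2 * m, Nat.lt_succ_self _⟩ + p ⟨m - 1, Nat.lt_of_le_of_lt (Nat.sub_le m 1) (Nat.lt_succ_of_le (Nat.le_mul_of_pos_left m two_pos))⟩ + p ⟨2 * m - 1, Nat.lt_of_le_of_lt (Nat.sub_le _ 1) (Nat.lt_succ_self _)⟩) ≤
      makespan p τ := by
  obtain ⟨hsort, h0⟩ := hp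
  have hr : ∀ j : Fin (2 * m + 1), p ⟨2 * m, by omega⟩ ≤ p j := by
    intro j
    exact hsort j ⟨2 * m, by omega⟩ (by have := j.isLt; simp [Fin.le_def]; omega)
  have hq : ∀ j : Fin (2 * m + 1), j.val ≠ 2 * m → p ⟨2 * m - 1, by omega⟩ ≤ p j := by
    intro j hj
    have := j.isLt
    exact hsort j ⟨2 * m - 1, by omega⟩ (by simp [Fin.le_def]; omega)
  have hpm : ∀ j : Fin (2 * m + 1), j.val < m → p ⟨m - 1, by omega⟩ ≤ p j := by
    intro j hj
    exact hsort j ⟨m - 1, by omega⟩ (by simp [Fin.le_def]; omega)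
  have hqr : p ⟨2 * m, by omega⟩ ≤ p ⟨2 * m - 1, by omega⟩ := hr _
  -- pigeonhole: some machine carries three jobs
  have hpig : ∃ i : Fin m,
      p ⟨2 * m - 1, by omega⟩ + p ⟨2 * m - 1, by omega⟩ + p ⟨2 * m, by omega⟩
        ≤ mload p τ i := by
    obtain ⟨i, -, hcard⟩ := Finset.exists_lt_card_fiber_of_mul_lt_card_of_maps_to
      (s := (Finset.univ : Finset (Fin (2 * m + 1)))) (t := (Finset.univ : Finset (Fin m)))
      (f := τ) (n := 2) (fun a _ => Finset.mem_univ _)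
      (by simpa using (by omega : m * 2 < 2 * m + 1))
    have h3 : 3 ≤ (Finset.univ.filter (fun x => τ x = i)).card := hcard
    obtain ⟨a, ha⟩ := Finset.card_pos.mp (lt_of_lt_of_le (by norm_num) h3)
    have h2' : 0 < ((Finset.univ.filter (fun x => τ x = i)).erase a).card := by
      rw [Finset.card_erase_of_mem ha]; omega
    obtain ⟨b, hb⟩ := Finset.card_pos.mp h2'
    have hbF : b ∈ Finset.univ.filter (fun x => τ x = i) := Finset.mem_of_mem_erase hb
    have hba : b ≠ a := Finset.ne_of_mem_erase hb
    have h1' : 0 < (((Finset.univ.filter (fun x => τ x = i)).erase a).erase b).card := by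
      rw [Finset.card_erase_of_mem hb, Finset.card_erase_of_mem ha]; omega
    obtain ⟨c, hc⟩ := Finset.card_pos.mp h1'
    have hcb : c ≠ b := Finset.ne_of_mem_erase hc
    have hc' : c ∈ (Finset.univ.filter (fun x => τ x = i)).erase a := Finset.mem_of_mem_erase hc
    have hca : c ≠ a := Finset.ne_of_mem_erase hc'
    have hcF : c ∈ Finset.univ.filter (fun x => τ x = i) := Finset.mem_of_mem_erase hc'
    have hτa : τ a = i := (Finset.mem_filter.mp ha).2
    have hτb : τ b = i := (Finset.mem_filter.mp hbF).2
    have hτc : τ c = i := (Finset.mem_filter.mp hcF).2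
    refine ⟨i, ?_⟩
    have hload := triple_le_mload p h0 τ (Ne.symm hba) (Ne.symm hca) (Ne.symm hcb) hτa hτb hτc
    by_cases h1 : a.val = 2 * m <;> by_cases h2 : b.val = 2 * m <;>
      by_cases h3 : c.val = 2 * m
    · exact absurd (Fin.ext (h1.trans h2.symm) : a = b) (Ne.symm hba)
    · exact absurd (Fin.ext (h1.trans h2.symm) : a = b) (Ne.symm hba)
    · exact absurd (Fin.ext (h1.trans h3.symm) : a = c) (Ne.symm hca)
    · have ha2 : a = ⟨2 * m, by omega⟩ := Fin.ext h1
      rw [ha2] at hload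
      linarith [hq b h2, hq c h3]
    · exact absurd (Fin.ext (h2.trans h3.symm) : b = c) (Ne.symm hcb)
    · have hb2 : b = ⟨2 * m, by omega⟩ := Fin.ext h2
      rw [hb2] at hload
      linarith [hq a h1, hq c h3]
    · have hc2 : c = ⟨2 * m, by omega⟩ := Fin.ext h3
      rw [hc2] at hload
      linarith [hq a h1, hq b h2]
    · linarith [hq a h1, hq b h2, hq c h3]
  obtain ⟨i₃, hi₃⟩ := hpig
  have hB := mload_le_makespan (by omega) p τ i₃
  by_cases hshare : ∃ a b : Fin (2 * m + 1), a.val < m ∧ b.val < m ∧ a ≠ b ∧ τ a = τ b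
  · obtain ⟨a, b, ham, hbm, hab, heq⟩ := hshare
    have h2 : p a + p b ≤ mload p τ (τ b) := pair_le_mload p h0 τ hab heq rfl
    have hA : mload p τ (τ b) ≤ makespan p τ := mload_le_makespan (by omega) p τ _
    linarith [hpm a ham, hpm b hbm]
  · push_neg at hshare
    have hginj : Function.Injective (fun k : Fin m => τ ⟨k.val, by omega⟩) := by
      intro k₁ k₂ hk
      by_contra hne
      refine hshare ⟨k₁.val, by omega⟩ ⟨k₂.val, by omega⟩ k₁.isLt k₂.isLt
        (Fin.ne_of_val_ne ?_) hk
      exact fun h => hne (Fin.ext h)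
    have hgsurj := Finite.injective_iff_surjective.mp hginj
    have finish : ∀ t₁ t₂ : Fin (m + 1), t₁ < t₂ →
        τ ⟨m + t₁.val, by omega⟩ = τ ⟨m + t₂.val, by omega⟩ →
        6 / 7 * (p ⟨2 * m, by omega⟩ + p ⟨m - 1, by omega⟩ + p ⟨2 * m - 1, by omega⟩) ≤
          makespan p τ := by
      intro t₁ t₂ hlt heq
      have hlt' : t₁.val < t₂.val := hlt
      have ht₂ := t₂.isLt
      obtain ⟨k, hk⟩ := hgsurj (τ ⟨m + t₁.val, by omega⟩)
      have hkm := k.isLt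
      have hja : (⟨k.val, by omega⟩ : Fin (2 * m + 1)) ≠ ⟨m + t₁.val, by omega⟩ :=
        Fin.ne_of_val_ne (by simp only [Fin.val_mk]; omega)
      have hjb : (⟨k.val, by omega⟩ : Fin (2 * m + 1)) ≠ ⟨m + t₂.val, by omega⟩ :=
        Fin.ne_of_val_ne (by simp only [Fin.val_mk]; omega)
      have hab : (⟨m + t₁.val, by omega⟩ : Fin (2 * m + 1)) ≠ ⟨m + t₂.val, by omega⟩ :=
        Fin.ne_of_val_ne (by simp only [Fin.val_mk]; omega)
      have hload := triple_le_mload p h0 τ hja hjb hab hk rfl heq.symm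
      have hlm : mload p τ (τ (⟨m + t₁.val, by omega⟩ : Fin (2 * m + 1))) ≤ makespan p τ :=
        mload_le_makespan (by omega) p τ _
      have hpj : p ⟨m - 1, by omega⟩ ≤ p ⟨k.val, by omega⟩ := hpm _ hkm
      have hpa : p ⟨2 * m - 1, by omega⟩ ≤ p ⟨m + t₁.val, by omega⟩ := hq _ (by simp only [Fin.val_mk]; omega)
      have hpb : p ⟨2 * m, by omega⟩ ≤ p ⟨m + t₂.val, by omega⟩ := hr _
      have hX0 : (0:ℝ) ≤ p ⟨2 * m, by omega⟩ + p ⟨m - 1, by omega⟩ +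
          p ⟨2 * m - 1, by omega⟩ := by
        have g1 := h0 (⟨2 * m, by omega⟩ : Fin (2 * m + 1))
        have g2 := h0 (⟨m - 1, by omega⟩ : Fin (2 * m + 1))
        have g3 := h0 (⟨2 * m - 1, by omega⟩ : Fin (2 * m + 1))
        linarith
      linarith
    obtain ⟨t₁, t₂, hne, heq⟩ := Fintype.exists_ne_map_eq_of_card_lt
      (fun t : Fin (m + 1) => τ ⟨m + t.val, by omega⟩) (by simp)
    rcases hne.lt_or_gt with hlt | hlt
    · exact finish t₁ t₂ hlt heq
    · exact finish t₂ t₁ hlt heq.symm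

set_option maxHeartbeats 1000000 in
/-- Proposition 11: for `n = 2m+1`, if `p_{2m+1} ≥ p_1 − p_m` and an
LPT′ schedule (job `2m+1`, the critical job of the LPT schedule, placed first, then
jobs `1,…,2m` list-scheduled in order) has makespan `p_{2m+1} + p_m + p_{2m}`, then
`p_{2m+1} + p_m + p_{2m} ≤ (7/6) · C*`; in particular the LPT-REV value is at most
`(7/6) · C*`. -/
theorem stmt8 {m : ℕ} (hm : 2 ≤ m)
    (p : Fin (2 * m + 1) → ℝ) (hp : SortedNonneg p)
    (h1 : p ⟨2 * m, by omega⟩ ≥ p ⟨0, by omega⟩ - p ⟨m - 1, by omega⟩)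
    (σ : Fin (2 * m + 1) → Fin m) (hσ : IsLPT p σ)
    (hcrit : IsCriticalJob p σ ⟨2 * m, by omega⟩)
    (σ' : Fin (2 * m + 1) → Fin m) (hσ' : IsLPTprime p ⟨2 * m, by omega⟩ σ')
    (hmk : makespan p σ' =
      p ⟨2 * m, by omega⟩ + p ⟨m - 1, by omega⟩ + p ⟨2 * m - 1, by omega⟩)
    (σ'' : Fin (2 * m + 1) → Fin m)
    (hσ'' : IsLPTsec p ⟨2 * m, by omega⟩ (posOn σ ⟨2 * m, by omega⟩) σ'') :
    p ⟨2 * m, by omega⟩ + p ⟨m - 1, by omega⟩ + p ⟨2 * m - 1, by omega⟩ ≤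
      (7 / 6) * optMakespan m p ∧
    min (makespan p σ) (min (makespan p σ') (makespan p σ'')) ≤
      (7 / 6) * optMakespan m p := by
  have hnonempty : Nonempty (Fin (2 * m + 1) → Fin m) := ⟨fun _ => ⟨0, by omega⟩⟩
  have hopt : 6 / 7 * (p ⟨2 * m, by omega⟩ + p ⟨m - 1, by omega⟩ + p ⟨2 * m - 1, by omega⟩)
      ≤ optMakespan m p := le_ciInf (fun τ => key_bound hm p hp τ)
  constructor
  · linarith
  · have h' : min (makespan p σ) (min (makespan p σ') (makespan p σ'')) ≤ makespan p σ' :=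
      le_trans (min_le_right _ _) (min_le_left _ _)
    linarith [h', hmk, hopt]
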